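/- Let G be a finite simple graph, let f be a γ_R-function on G, and let V_i = {v ∈ V(G) : f(v) = i} for i ∈ {0,1,2}. Then no vertex in V_1 is adjacent to a vertex in V_2. -/
import Mathlib


open SimpleGraph

/-- The closed neighbourhood `N[v]` of a vertex `v`: `v` together with its neighbours. -/
def closedNbhd {V : Type*} (G : SimpleGraph V) (v : V) : Set V :=
  insert v (G.neighborSet v)

/-- A Roman dominating function on `G`: a map into `{0,1,2}` such that every vertex with
value `0` has a neighbour with value `2`. -/
def IsRomanDominating {V : Type*} (G : SimpleGraph V) (f : V → ℕ) : Prop :=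
  (∀ v, f v ≤ 2) ∧ ∀ v, f v = 0 → ∃ u, G.Adj v u ∧ f u = 2

/-- The Roman domination number `γ_R(G)`: the minimum weight of a Roman dominating
function on `G`. -/
noncomputable def romanNumber {V : Type*} [Fintype V] (G : SimpleGraph V) : ℕ :=
  sInf {w | ∃ f : V → ℕ, IsRomanDominating G f ∧ ∑ v, f v = w}

/-- A two-neighbour packing of `G`: a set of vertices such that every closed
neighbourhood contains at most two of its members. -/
def IsTwoNbrPacking {V : Type*} (G : SimpleGraph V) (A : Set V) : Prop :=
  ∀ v, (closedNbhd G v ∩ A).ncard ≤ 2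

/-- The two-neighbour packing number `γ̄_R(G)`: the maximum size of a two-neighbour
packing of `G`. -/
noncomputable def tnpNumber {V : Type*} [Fintype V] (G : SimpleGraph V) : ℕ :=
  sSup {n | ∃ A : Set V, IsTwoNbrPacking G A ∧ A.ncard = n}

theorem no_edge_V1_V2 {V : Type*} [Fintype V] (G : SimpleGraph V)
    (f : V → ℕ) (hf : IsRomanDominating G f) (hmin : ∑ v, f v = romanNumber G) :
    ∀ u v : V, f u = 1 → f v = 2 → ¬ G.Adj u v := by
  classical
  intro u v hu hv hadj
  set g : V → ℕ := fun w => if w = u then 0 else f w with hg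
  have hgRD : IsRomanDominating G g := by
    constructor
    · intro w
      by_cases h : w = u <;> simp [hg, h, hf.1 w]
    · intro w hw
      by_cases h : w = u
      · have hvu : v ≠ u := fun h' => by rw [h', hu] at hv; omega
        exact ⟨v, h ▸ hadj, by simp [hg, hvu, hv]⟩
      · obtain ⟨x, hx, hx2⟩ := hf.2 w (by simpa [hg, h] using hw)
        refine ⟨x, hx, ?_⟩
        have hxu : x ≠ u := fun h' => by simp [h', hu] at hx2
        simp [hg, hxu, hx2]
  have hle : romanNumber G ≤ ∑ w, g w :=
    Nat.sInf_le ⟨g, hgRD, rfl⟩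
  have hsum : ∑ w, g w + 1 = ∑ w, f w := by
    rw [← Finset.sum_erase_add _ f (Finset.mem_univ u),
        ← Finset.sum_erase_add _ g (Finset.mem_univ u)]
    have he : ∑ x ∈ Finset.univ.erase u, g x = ∑ x ∈ Finset.univ.erase u, f x :=
      Finset.sum_congr rfl fun x hx => by simp [hg, Finset.ne_of_mem_erase hx]
    have : g u = 0 := by simp [hg]
    omega
  omega
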